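/- Let n ≥ 1 and A = (Z/2)[x,c,d]/⟨x², c² + cx, d^(n+1)⟩, graded with deg x = deg c = 1 and deg d = 2. Then for 0 ≤ k ≤ n, the degree-(2k+1) homogeneous component of A has dimension 2 over Z/2 (spanned by c·d^k and x·d^k), for 1 ≤ k ≤ n the degree-2k component has dimension 2 (spanned by d^k and c²·d^(k-1)), the degree-(2n+2) component is 1-dimensional spanned by c²·d^n, and all components in degree greater than 2n+2 vanish. -/

import Mathlib

open MvPolynomial

/-- The mod 2 cohomology ring of the Wall manifold `Q(1,n)`:
`(ℤ/2)[x,c,d]/⟨x², c² + cx, d^(n+1)⟩`, where `x = X 0`, `c = X 1`, `d = X 2`. -/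
noncomputable abbrev Q1nCohomology (n : ℕ) : Type :=
  MvPolynomial (Fin 3) (ZMod 2) ⧸
    (Ideal.span {(X 0 : MvPolynomial (Fin 3) (ZMod 2)) ^ 2,
      (X 1) ^ 2 + (X 1) * (X 0), (X 2) ^ (n + 1)})

noncomputable def qx (n : ℕ) : Q1nCohomology n := Ideal.Quotient.mk _ (X 0)
noncomputable def qc (n : ℕ) : Q1nCohomology n := Ideal.Quotient.mk _ (X 1)
noncomputable def qd (n : ℕ) : Q1nCohomology n := Ideal.Quotient.mk _ (X 2)

/-- The degree-`j` homogeneous component of `H^*(Q(1,n))`, for the grading with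
`deg x = deg c = 1`, `deg d = 2`: the span of the images of the monomials of
weighted degree `j`. -/
noncomputable def Q1nComp (n j : ℕ) : Submodule (ZMod 2) (Q1nCohomology n) :=
  Submodule.span (ZMod 2)
    {y | ∃ s : Fin 3 →₀ ℕ, s 0 + s 1 + 2 * s 2 = j ∧
      y = Ideal.Quotient.mk _ (monomial s (1 : ZMod 2))}


namespace WallAux

set_option maxHeartbeats 1000000
set_option synthInstance.maxHeartbeats 400000


abbrev RR : Type := MvPolynomial (Fin 3) (ZMod 2)
abbrev VV : Type := (Fin 4 × ℕ) →₀ ZMod 2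

noncomputable def nf (n a b e : ℕ) : VV :=
  if e ≤ n then
    if a = 0 ∧ b = 0 then Finsupp.single (0, e) 1
    else if a = 1 ∧ b = 0 then Finsupp.single (1, e) 1
    else if a = 0 ∧ b = 1 then Finsupp.single (2, e) 1
    else if (a = 0 ∧ b = 2) ∨ (a = 1 ∧ b = 1) then Finsupp.single (3, e) 1
    else 0
  else 0

noncomputable def L (n : ℕ) (p : RR) : VV :=
  (AddMonoidAlgebra.coeff p).sum fun s a => a • nf n (s 0) (s 1) (s 2)

lemma L_monomial (n : ℕ) (s : Fin 3 →₀ ℕ) (a : ZMod 2) :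
    L n (monomial s a) = a • nf n (s 0) (s 1) (s 2) := by
  rw [L, ← single_eq_monomial]
  exact Finsupp.sum_single_index (by simp)

lemma L_add (n : ℕ) (p q : RR) : L n (p + q) = L n p + L n q :=
  by
  rw [L, L, L, AddMonoidAlgebra.coeff_add]
  exact Finsupp.sum_add_index' (fun _ => by simp) (fun _ a b => add_smul a b _)

lemma L_zero (n : ℕ) : L n 0 = 0 :=
  by rw [L, AddMonoidAlgebra.coeff_zero]; exact Finsupp.sum_zero_index

lemma nf_key (n a b e : ℕ) : nf n a (b + 2) e = nf n (a + 1) (b + 1) e := by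
  unfold nf
  split_ifs <;> first | rfl | omega | simp_all

lemma nf_big_a (n a b e : ℕ) (h : 2 ≤ a) : nf n a b e = 0 := by
  unfold nf
  split_ifs <;> first | rfl | omega

lemma nf_big_e (n a b e : ℕ) (h : n < e) : nf n a b e = 0 := by
  unfold nf
  split_ifs <;> first | rfl | omega

lemma coord_add (s t : Fin 3 →₀ ℕ) (i : Fin 3) : (s + t) i = s i + t i := rfl

lemma Lg1 (n : ℕ) (r : RR) : L n (r * X 0 ^ 2) = 0 := by
  induction r using MvPolynomial.induction_on' with
  | add p q hp hq => rw [add_mul, L_add, hp, hq, add_zero]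
  | monomial s a =>
    rw [X_pow_eq_monomial, monomial_mul, mul_one, L_monomial]
    have h0 : (s + Finsupp.single 0 2 : Fin 3 →₀ ℕ) 0 = s 0 + 2 := by
      simp
    have h1 : (s + Finsupp.single 0 2 : Fin 3 →₀ ℕ) 1 = s 1 := by
      simp
    have h2 : (s + Finsupp.single 0 2 : Fin 3 →₀ ℕ) 2 = s 2 := by
      simp
    rw [h0, h1, h2, nf_big_a n _ _ _ (by omega), smul_zero]

lemma Lg3 (n : ℕ) (r : RR) : L n (r * X 2 ^ (n + 1)) = 0 := by
  induction r using MvPolynomial.induction_on' with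
  | add p q hp hq => rw [add_mul, L_add, hp, hq, add_zero]
  | monomial s a =>
    rw [X_pow_eq_monomial, monomial_mul, mul_one, L_monomial]
    have h2 : (s + Finsupp.single 2 (n + 1) : Fin 3 →₀ ℕ) 2 = s 2 + (n + 1) := by
      simp
    rw [h2, nf_big_e n _ _ _ (by omega), smul_zero]

lemma Lg2 (n : ℕ) (r : RR) : L n (r * (X 1 ^ 2 + X 1 * X 0)) = 0 := by
  induction r using MvPolynomial.induction_on' with
  | add p q hp hq => rw [add_mul, L_add, hp, hq, add_zero]
  | monomial s a =>
    have hx10 : (X 1 : RR) * X 0 = monomial (Finsupp.single (1:Fin 3) 1 + Finsupp.single (0:Fin 3) 1) 1 := by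
      rw [← pow_one (X 1 : RR), ← pow_one (X 0 : RR), X_pow_eq_monomial, X_pow_eq_monomial,
        monomial_mul, one_mul]
    rw [mul_add, L_add, X_pow_eq_monomial, hx10, monomial_mul, monomial_mul, mul_one,
      L_monomial, L_monomial]
    have e0 : (s + Finsupp.single 1 2 : Fin 3 →₀ ℕ) 0 = s 0 := by simp
    have e1 : (s + Finsupp.single 1 2 : Fin 3 →₀ ℕ) 1 = s 1 + 2 := by simp
    have e2 : (s + Finsupp.single 1 2 : Fin 3 →₀ ℕ) 2 = s 2 := by simp
    have f0 : (s + (Finsupp.single 1 1 + Finsupp.single 0 1) : Fin 3 →₀ ℕ) 0 = s 0 + 1 := by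
      simp
    have f1 : (s + (Finsupp.single 1 1 + Finsupp.single 0 1) : Fin 3 →₀ ℕ) 1 = s 1 + 1 := by
      simp
    have f2 : (s + (Finsupp.single 1 1 + Finsupp.single 0 1) : Fin 3 →₀ ℕ) 2 = s 2 := by
      simp
    rw [e0, e1, e2, f0, f1, f2, nf_key, ← add_smul, CharTwo.add_self_eq_zero, zero_smul]

noncomputable abbrev Iw (n : ℕ) : Ideal RR :=
  Ideal.span {(X 0 : RR) ^ 2, (X 1) ^ 2 + (X 1) * (X 0), (X 2) ^ (n + 1)}

lemma L_zero_of_mem (n : ℕ) {p : RR} (hp : p ∈ Iw n) : L n p = 0 := by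
  have key : ∀ r : RR, L n (r * p) = 0 := by
    refine Submodule.span_induction (p := fun x _ => ∀ r : RR, L n (r * x) = 0)
      ?_ ?_ ?_ ?_ hp
    · rintro x hx r
      simp only [Set.mem_insert_iff, Set.mem_singleton_iff] at hx
      rcases hx with rfl | rfl | rfl
      · exact Lg1 n r
      · exact Lg2 n r
      · exact Lg3 n r
    · intro r; rw [mul_zero, L_zero]
    · intro x y _ _ hx hy r
      rw [mul_add, L_add, hx, hy, add_zero]
    · intro c x _ hx r
      rw [smul_eq_mul, ← mul_assoc]
      exact hx (r * c)
  simpa using key 1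







lemma rel_x (n : ℕ) : qx n ^ 2 = 0 := by
  show (Ideal.Quotient.mk (Iw n) (X 0)) ^ 2 = 0
  rw [← map_pow, Ideal.Quotient.eq_zero_iff_mem]
  exact Ideal.subset_span (Set.mem_insert _ _)

lemma rel_d (n : ℕ) : qd n ^ (n + 1) = 0 := by
  show (Ideal.Quotient.mk (Iw n) (X 2)) ^ (n + 1) = 0
  rw [← map_pow, Ideal.Quotient.eq_zero_iff_mem]
  exact Ideal.subset_span (by simp)

lemma rel_c (n : ℕ) : qc n ^ 2 = qc n * qx n := by
  have h : qc n ^ 2 + qc n * qx n = 0 := by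
    show Ideal.Quotient.mk (Iw n) (X 1) ^ 2 +
        Ideal.Quotient.mk (Iw n) (X 1) * Ideal.Quotient.mk (Iw n) (X 0) = 0
    rw [← map_pow, ← map_mul, ← map_add, Ideal.Quotient.eq_zero_iff_mem]
    exact Ideal.subset_span (by simp)
  have hb : qc n * qx n + qc n * qx n = 0 := by
    show Ideal.Quotient.mk (Iw n) (X 1) * Ideal.Quotient.mk (Iw n) (X 0) +
        Ideal.Quotient.mk (Iw n) (X 1) * Ideal.Quotient.mk (Iw n) (X 0) = 0
    rw [← map_mul, ← map_add, CharTwo.add_self_eq_zero, map_zero]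
  linear_combination h - hb

lemma qx_pow (n a : ℕ) (h : 2 ≤ a) : qx n ^ a = 0 := by
  have : qx n ^ a = qx n ^ (a - 2) * qx n ^ 2 := by rw [← pow_add]; congr 1; omega
  rw [this, rel_x, mul_zero]

lemma qd_pow (n e : ℕ) (h : n + 1 ≤ e) : qd n ^ e = 0 := by
  have : qd n ^ e = qd n ^ (e - (n + 1)) * qd n ^ (n + 1) := by rw [← pow_add]; congr 1; omega
  rw [this, rel_d, mul_zero]

lemma qcqx (n : ℕ) : qc n ^ 2 * qx n = 0 := by
  rw [rel_c]
  have : qc n * qx n * qx n = qc n * qx n ^ 2 := by ring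
  rw [this, rel_x, mul_zero]

lemma qc_cube (n : ℕ) : qc n ^ 3 = 0 := by
  have h3 : qc n ^ 3 = qc n ^ 2 * qc n := by ring
  rw [h3, rel_c]
  have : qc n * qx n * qc n = qc n ^ 2 * qx n := by ring
  rw [this, qcqx]

lemma qc_pow (n b : ℕ) (h : 3 ≤ b) : qc n ^ b = 0 := by
  have : qc n ^ b = qc n ^ (b - 3) * qc n ^ 3 := by rw [← pow_add]; congr 1; omega
  rw [this, qc_cube, mul_zero]

lemma mk_monomial (n : ℕ) (s : Fin 3 →₀ ℕ) :
    Ideal.Quotient.mk (Iw n) (monomial s (1 : ZMod 2)) =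
      qx n ^ (s 0) * qc n ^ (s 1) * qd n ^ (s 2) := by
  have hs : monomial s (1 : ZMod 2) = X 0 ^ (s 0) * X 1 ^ (s 1) * X 2 ^ (s 2) := by
    have hsum : s = Finsupp.single 0 (s 0) + Finsupp.single 1 (s 1) + Finsupp.single 2 (s 2) := by
      ext i
      fin_cases i <;> simp
    rw [X_pow_eq_monomial, X_pow_eq_monomial, X_pow_eq_monomial, monomial_mul, monomial_mul,
      one_mul, one_mul]
    conv_lhs => rw [hsum]
  rw [hs, map_mul, map_mul, map_pow, map_pow, map_pow]
  rfl

noncomputable def tri (a b e : ℕ) : Fin 3 →₀ ℕ :=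
  Finsupp.single 0 a + Finsupp.single 1 b + Finsupp.single 2 e

lemma tri0 (a b e : ℕ) : tri a b e 0 = a := by simp [tri]
lemma tri1 (a b e : ℕ) : tri a b e 1 = b := by simp [tri]
lemma tri2 (a b e : ℕ) : tri a b e 2 = e := by simp [tri]

lemma elt_eq (n a b e : ℕ) :
    qx n ^ a * qc n ^ b * qd n ^ e =
      Ideal.Quotient.mk (Iw n) (monomial (tri a b e) (1 : ZMod 2)) := by
  rw [mk_monomial, tri0, tri1, tri2]

lemma L_tri (n a b e : ℕ) : L n (monomial (tri a b e) (1 : ZMod 2)) = nf n a b e := by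
  rw [L_monomial, tri0, tri1, tri2, one_smul]


lemma mem_comp (n j : ℕ) (s : Fin 3 →₀ ℕ) (h : s 0 + s 1 + 2 * s 2 = j) :
    qx n ^ (s 0) * qc n ^ (s 1) * qd n ^ (s 2) ∈ Q1nComp n j := by
  have : (Ideal.Quotient.mk (Iw n) (monomial s (1 : ZMod 2))) ∈ Q1nComp n j := by
    unfold Q1nComp
    exact Submodule.subset_span ⟨s, h, rfl⟩
  rwa [mk_monomial] at this

lemma mem_comp' (n j a b e : ℕ) (h : a + b + 2 * e = j) :
    qx n ^ a * qc n ^ b * qd n ^ e ∈ Q1nComp n j := by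
  have := mem_comp n j (tri a b e) (by rw [tri0, tri1, tri2]; exact h)
  rwa [tri0, tri1, tri2] at this

lemma L_ne_single (n a b e : ℕ) (i : Fin 4) (hnf : nf n a b e = Finsupp.single (i, e) 1) :
    L n (monomial (tri a b e) (1 : ZMod 2)) ≠ 0 := by
  rw [L_tri, hnf]
  simp [Finsupp.single_eq_zero]

lemma indep_pair (n : ℕ) (p q : MvPolynomial (Fin 3) (ZMod 2))
    (hp : L n p ≠ 0) (hq : L n q ≠ 0) (hpq : L n (p + q) ≠ 0) :
    LinearIndependent (ZMod 2) ![Ideal.Quotient.mk (Iw n) p, Ideal.Quotient.mk (Iw n) q] := by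
  rw [LinearIndependent.pair_iff]
  intro s t hst
  have hcases : ∀ z : ZMod 2, z = 0 ∨ z = 1 := by decide
  have key : ∀ r : MvPolynomial (Fin 3) (ZMod 2),
      Ideal.Quotient.mk (Iw n) r = 0 → L n r = 0 := fun r hr =>
    L_zero_of_mem n ((Ideal.Quotient.eq_zero_iff_mem).1 hr)
  rcases hcases s with rfl | rfl <;> rcases hcases t with rfl | rfl
  · exact ⟨rfl, rfl⟩
  · rw [zero_smul, one_smul, zero_add] at hst
    exact absurd (key q hst) hq
  · rw [one_smul, zero_smul, add_zero] at hst
    exact absurd (key p hst) hp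
  · rw [one_smul, one_smul] at hst
    refine absurd (key (p + q) ?_) hpq
    rw [map_add]
    exact hst

lemma finrank_pair {M : Type*} [AddCommGroup M] [Module (ZMod 2) M] {u v : M}
    (h : LinearIndependent (ZMod 2) ![u, v]) :
    Module.finrank (ZMod 2) (Submodule.span (ZMod 2) {u, v}) = 2 := by
  have hr : Set.range ![u, v] = {u, v} := by
    ext z
    constructor
    · rintro ⟨i, rfl⟩
      fin_cases i <;> simp
    · rintro (rfl | rfl)
      exacts [⟨0, rfl⟩, ⟨1, rfl⟩]
  have := finrank_span_eq_card h
  rw [hr] at this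
  simpa using this

lemma odd_case (n k a b e : ℕ) (hk : k ≤ n) (h : a + b + 2 * e = 2 * k + 1) :
    qx n ^ a * qc n ^ b * qd n ^ e ∈
      Submodule.span (ZMod 2) {qc n * qd n ^ k, qx n * qd n ^ k} := by
  rcases le_or_gt 2 a with ha | ha
  · rw [qx_pow n a ha, zero_mul, zero_mul]
    exact Submodule.zero_mem _
  rcases le_or_gt 3 b with hb | hb
  · rw [qc_pow n b hb, mul_zero, zero_mul]
    exact Submodule.zero_mem _
  rcases le_or_gt (n + 1) e with he | he
  · rw [qd_pow n e he, mul_zero]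
    exact Submodule.zero_mem _
  interval_cases a <;> interval_cases b
  · omega
  · obtain rfl : e = k := by omega
    refine Submodule.subset_span ?_
    simp only [pow_zero, pow_one, one_mul]
    exact Set.mem_insert _ _
  · omega
  · obtain rfl : e = k := by omega
    refine Submodule.subset_span ?_
    simp only [pow_zero, pow_one, mul_one]
    exact Set.mem_insert_of_mem _ rfl
  · omega
  · have h12 : qx n ^ 1 * qc n ^ 2 * qd n ^ e = qc n ^ 2 * qx n * qd n ^ e := by ring
    rw [h12, qcqx, zero_mul]
    exact Submodule.zero_mem _

lemma even_case (n k a b e : ℕ) (hk1 : 1 ≤ k) (hk : k ≤ n) (h : a + b + 2 * e = 2 * k) :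
    qx n ^ a * qc n ^ b * qd n ^ e ∈
      Submodule.span (ZMod 2) {qd n ^ k, qc n ^ 2 * qd n ^ (k - 1)} := by
  rcases le_or_gt 2 a with ha | ha
  · rw [qx_pow n a ha, zero_mul, zero_mul]
    exact Submodule.zero_mem _
  rcases le_or_gt 3 b with hb | hb
  · rw [qc_pow n b hb, mul_zero, zero_mul]
    exact Submodule.zero_mem _
  rcases le_or_gt (n + 1) e with he | he
  · rw [qd_pow n e he, mul_zero]
    exact Submodule.zero_mem _
  interval_cases a <;> interval_cases b
  · obtain rfl : e = k := by omega
    refine Submodule.subset_span ?_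
    simp only [pow_zero, one_mul]
    exact Set.mem_insert _ _
  · omega
  · obtain rfl : e = k - 1 := by omega
    refine Submodule.subset_span ?_
    simp only [pow_zero, one_mul]
    exact Set.mem_insert_of_mem _ rfl
  · omega
  · obtain rfl : e = k - 1 := by omega
    have h11 : qx n ^ 1 * qc n ^ 1 * qd n ^ (k - 1) = (qc n * qx n) * qd n ^ (k - 1) := by ring
    rw [h11, ← rel_c]
    exact Submodule.subset_span (Set.mem_insert_of_mem _ rfl)
  · omega

lemma top_case (n a b e : ℕ) (h : a + b + 2 * e = 2 * n + 2) :
    qx n ^ a * qc n ^ b * qd n ^ e ∈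
      Submodule.span (ZMod 2) {qc n ^ 2 * qd n ^ n} := by
  rcases le_or_gt 2 a with ha | ha
  · rw [qx_pow n a ha, zero_mul, zero_mul]
    exact Submodule.zero_mem _
  rcases le_or_gt 3 b with hb | hb
  · rw [qc_pow n b hb, mul_zero, zero_mul]
    exact Submodule.zero_mem _
  rcases le_or_gt (n + 1) e with he | he
  · rw [qd_pow n e he, mul_zero]
    exact Submodule.zero_mem _
  interval_cases a <;> interval_cases b
  · omega
  · omega
  · have hen : e = n := by omega
    rw [hen]
    refine Submodule.subset_span ?_
    simp only [pow_zero, one_mul]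
    rfl
  · omega
  · have hen : e = n := by omega
    rw [hen]
    have h11 : qx n ^ 1 * qc n ^ 1 * qd n ^ n = (qc n * qx n) * qd n ^ n := by ring
    rw [h11, ← rel_c]
    exact Submodule.subset_span rfl
  · omega

lemma high_case (n j a b e : ℕ) (hj : 2 * n + 2 < j) (h : a + b + 2 * e = j) :
    qx n ^ a * qc n ^ b * qd n ^ e = 0 := by
  rcases le_or_gt 2 a with ha | ha
  · rw [qx_pow n a ha, zero_mul, zero_mul]
  rcases le_or_gt 3 b with hb | hb
  · rw [qc_pow n b hb, mul_zero, zero_mul]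
  rcases le_or_gt (n + 1) e with he | he
  · rw [qd_pow n e he, mul_zero]
  interval_cases a <;> interval_cases b
  · omega
  · omega
  · omega
  · omega
  · omega
  · have h12 : qx n ^ 1 * qc n ^ 2 * qd n ^ e = qc n ^ 2 * qx n * qd n ^ e := by ring
    rw [h12, qcqx, zero_mul]

end WallAux

open WallAux

set_option maxHeartbeats 1600000
set_option synthInstance.maxHeartbeats 1000000

/-- Additive structure of `H^*(Q(1,n); ℤ/2)`, `n ≥ 1`: the odd components
`H^(2k+1)` (`0 ≤ k ≤ n`) are 2-dimensional spanned by `c d^k, x d^k`; the even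
components `H^(2k)` (`1 ≤ k ≤ n`) are 2-dimensional spanned by `d^k, c² d^(k-1)`;
the top component `H^(2n+2)` is 1-dimensional spanned by `c² d^n`; and all
components above degree `2n+2` vanish. -/
theorem stmt4 (n : ℕ) (hn : 1 ≤ n) :
    (∀ k, k ≤ n →
      Q1nComp n (2 * k + 1) =
        Submodule.span (ZMod 2) {qc n * (qd n) ^ k, qx n * (qd n) ^ k} ∧
      Module.finrank (ZMod 2) (Q1nComp n (2 * k + 1)) = 2) ∧
    (∀ k, 1 ≤ k → k ≤ n →
      Q1nComp n (2 * k) =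
        Submodule.span (ZMod 2) {(qd n) ^ k, (qc n) ^ 2 * (qd n) ^ (k - 1)} ∧
      Module.finrank (ZMod 2) (Q1nComp n (2 * k)) = 2) ∧
    (Q1nComp n (2 * n + 2) =
        Submodule.span (ZMod 2) {(qc n) ^ 2 * (qd n) ^ n} ∧
      Module.finrank (ZMod 2) (Q1nComp n (2 * n + 2)) = 1) ∧
    (∀ j, 2 * n + 2 < j → Q1nComp n j = ⊥) := by
  refine ⟨?_, ?_, ?_, ?_⟩
  · -- odd components
    intro k hk
    have hspan : Q1nComp n (2 * k + 1) =
        Submodule.span (ZMod 2) {qc n * (qd n) ^ k, qx n * (qd n) ^ k} := by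
      apply le_antisymm
      · unfold Q1nComp
        rw [Submodule.span_le]
        rintro y ⟨s, hdeg, rfl⟩
        rw [mk_monomial]
        exact odd_case n k (s 0) (s 1) (s 2) hk hdeg
      · rw [Submodule.span_le]
        intro y hy
        simp only [Set.mem_insert_iff, Set.mem_singleton_iff] at hy
        rcases hy with rfl | rfl
        · have := mem_comp' n (2 * k + 1) 0 1 k (by omega)
          simpa using this
        · have := mem_comp' n (2 * k + 1) 1 0 k (by omega)
          simpa using this
    refine ⟨hspan, ?_⟩
    rw [hspan]
    apply finrank_pair
    have h1 : qc n * (qd n) ^ k =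
        Ideal.Quotient.mk (Iw n) (monomial (tri 0 1 k) (1 : ZMod 2)) := by
      rw [← elt_eq]; ring
    have h2 : qx n * (qd n) ^ k =
        Ideal.Quotient.mk (Iw n) (monomial (tri 1 0 k) (1 : ZMod 2)) := by
      rw [← elt_eq]; ring
    have e1 : nf n 0 1 k = Finsupp.single ((2 : Fin 4), k) 1 := by simp [nf, hk]
    have e2 : nf n 1 0 k = Finsupp.single ((1 : Fin 4), k) 1 := by simp [nf, hk]
    rw [h1, h2]
    apply indep_pair
    · exact L_ne_single n 0 1 k 2 e1
    · exact L_ne_single n 1 0 k 1 e2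
    · rw [L_add, L_tri, L_tri, e1, e2]
      intro hcontra
      have := DFunLike.congr_fun hcontra ((2 : Fin 4), k)
      simp [Finsupp.single_apply] at this
  · -- even components
    intro k hk1 hk
    have hk' : k - 1 ≤ n := by omega
    have hspan : Q1nComp n (2 * k) =
        Submodule.span (ZMod 2) {(qd n) ^ k, (qc n) ^ 2 * (qd n) ^ (k - 1)} := by
      apply le_antisymm
      · unfold Q1nComp
        rw [Submodule.span_le]
        rintro y ⟨s, hdeg, rfl⟩
        rw [mk_monomial]
        exact even_case n k (s 0) (s 1) (s 2) hk1 hk hdeg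
      · rw [Submodule.span_le]
        intro y hy
        simp only [Set.mem_insert_iff, Set.mem_singleton_iff] at hy
        rcases hy with rfl | rfl
        · have := mem_comp' n (2 * k) 0 0 k (by omega)
          simpa using this
        · have := mem_comp' n (2 * k) 0 2 (k - 1) (by omega)
          simpa using this
    refine ⟨hspan, ?_⟩
    rw [hspan]
    apply finrank_pair
    have h1 : (qd n) ^ k =
        Ideal.Quotient.mk (Iw n) (monomial (tri 0 0 k) (1 : ZMod 2)) := by
      rw [← elt_eq]; ring
    have h2 : (qc n) ^ 2 * (qd n) ^ (k - 1) =
        Ideal.Quotient.mk (Iw n) (monomial (tri 0 2 (k - 1)) (1 : ZMod 2)) := by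
      rw [← elt_eq]; ring
    have e1 : nf n 0 0 k = Finsupp.single ((0 : Fin 4), k) 1 := by simp [nf, hk]
    have e2 : nf n 0 2 (k - 1) = Finsupp.single ((3 : Fin 4), k - 1) 1 := by simp [nf, hk']
    rw [h1, h2]
    apply indep_pair
    · exact L_ne_single n 0 0 k 0 e1
    · exact L_ne_single n 0 2 (k - 1) 3 e2
    · rw [L_add, L_tri, L_tri, e1, e2]
      intro hcontra
      have := DFunLike.congr_fun hcontra ((0 : Fin 4), k)
      simp [Finsupp.single_apply] at this
  · -- top component
    have hspan : Q1nComp n (2 * n + 2) =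
        Submodule.span (ZMod 2) {(qc n) ^ 2 * (qd n) ^ n} := by
      apply le_antisymm
      · unfold Q1nComp
        rw [Submodule.span_le]
        rintro y ⟨s, hdeg, rfl⟩
        rw [mk_monomial]
        exact top_case n (s 0) (s 1) (s 2) hdeg
      · rw [Submodule.span_le]
        intro y hy
        simp only [Set.mem_singleton_iff] at hy
        subst hy
        have := mem_comp' n (2 * n + 2) 0 2 n (by omega)
        simpa using this
    refine ⟨hspan, ?_⟩
    rw [hspan]
    have h2 : (qc n) ^ 2 * (qd n) ^ n =
        Ideal.Quotient.mk (Iw n) (monomial (tri 0 2 n) (1 : ZMod 2)) := by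
      rw [← elt_eq]; ring
    have hne : (qc n) ^ 2 * (qd n) ^ n ≠ 0 := by
      rw [h2]
      intro h0
      have hL := L_zero_of_mem n (Ideal.Quotient.eq_zero_iff_mem.1 h0)
      rw [L_tri] at hL
      simp [nf] at hL
    exact finrank_span_singleton hne
  · -- vanishing above top degree
    intro j hj
    unfold Q1nComp
    rw [Submodule.span_eq_bot]
    rintro y ⟨s, hdeg, rfl⟩
    rw [mk_monomial]
    exact high_case n j (s 0) (s 1) (s 2) hj hdeg
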